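/- (Lemma on common boundaries) Let T be a truncated proper subtree of the dyadic tree of [0,1]^d with outer leaves Λ_T, and let B(Λ_T) be the set of points belonging to at least two cubes of Λ_T. Then the (d−1)-dimensional surface area satisfies |B(Λ_T)| ≤ 2^{d+1} d (#T)^{1/d}. -/
import Mathlib

open MeasureTheory

/-- Corner (minimal vertex) of the dyadic cube addressed by a list of child selectors
(root `[]` is `[0,1]^d`; the child of `l` selected by `b : Fin d → Bool` halves each side). -/
noncomputable def dyCorner (d : ℕ) : List (Fin d → Bool) → (Fin d → ℝ)
  | [] => fun _ => 0
  | b :: l => fun i => dyCorner d l i + (if b i then ((2:ℝ) ^ (l.length + 1))⁻¹ else 0)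

/-- The dyadic cube addressed by `n`; it has sidelength `2^{-n.length}`. -/
noncomputable def dyCube (d : ℕ) (n : List (Fin d → Bool)) : Set (Fin d → ℝ) :=
  Set.univ.pi fun i => Set.Icc (dyCorner d n i) (dyCorner d n i + ((2:ℝ) ^ n.length)⁻¹)

/-- Prefix split: if neither list is a prefix of the other, they share a common
prefix followed by distinct elements. -/
lemma prefix_split {α : Type*} : ∀ (p q : List α), ¬ p <+: q → ¬ q <+: p →
    ∃ (s : List α) (a b : α) (p' q' : List α), a ≠ b ∧ p = s ++ a :: p' ∧ q = s ++ b :: q'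
  | [], q, h, _ => absurd (List.nil_prefix) h
  | p, [], _, h => absurd (List.nil_prefix) h
  | x :: p, y :: q, h1, h2 => by
    by_cases hxy : x = y
    · subst hxy
      obtain ⟨s, a, b, p', q', hab, hp, hq⟩ :=
        prefix_split p q (fun hpq => h1 (List.cons_prefix_cons.mpr ⟨rfl, hpq⟩)) (fun hqp => h2 (List.cons_prefix_cons.mpr ⟨rfl, hqp⟩))
      exact ⟨x :: s, a, b, p', q', hab, by simp [hp], by simp [hq]⟩
    · exact ⟨[], x, y, p, q, hxy, rfl, rfl⟩

lemma suffix_split {α : Type*} (p q : List α) (h1 : ¬ p <:+ q) (h2 : ¬ q <:+ p) :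
    ∃ (s : List α) (a b : α) (p' q' : List α), a ≠ b ∧ p = p' ++ a :: s ∧ q = q' ++ b :: s := by
  obtain ⟨s, a, b, p', q', hab, hp, hq⟩ := prefix_split p.reverse q.reverse
    (fun hh => h1 (List.reverse_prefix.mp (by simpa using hh)))
    (fun hh => h2 (List.reverse_prefix.mp (by simpa using hh)))
  refine ⟨s.reverse, a, b, p'.reverse, q'.reverse, hab, ?_, ?_⟩
  · have := congrArg List.reverse hp; simpa using this
  · have := congrArg List.reverse hq; simpa using this

lemma two_pow_succ_inv (k : ℕ) :
    ((2:ℝ) ^ (k + 1))⁻¹ + ((2:ℝ) ^ (k + 1))⁻¹ = ((2:ℝ) ^ k)⁻¹ := by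
  have : (2:ℝ) ^ k ≠ 0 := by positivity
  field_simp
  ring

lemma dyCube_cons_subset {d : ℕ} (b : Fin d → Bool) (l : List (Fin d → Bool)) :
    dyCube d (b :: l) ⊆ dyCube d l := by
  intro x hx i _
  have h := hx i (Set.mem_univ i)
  simp only [dyCorner, List.length_cons, Set.mem_Icc] at h ⊢
  set δ := (if b i then ((2:ℝ) ^ (l.length + 1))⁻¹ else 0) with hδ
  have hδ0 : 0 ≤ δ := by rw [hδ]; split <;> positivity
  have hδh : δ ≤ ((2:ℝ) ^ (l.length + 1))⁻¹ := by rw [hδ]; split <;> first | rfl | positivity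
  have key := two_pow_succ_inv l.length
  exact ⟨by linarith [h.1], by linarith [h.2]⟩

lemma dyCube_append_subset {d : ℕ} (p l : List (Fin d → Bool)) :
    dyCube d (p ++ l) ⊆ dyCube d l := by
  induction p with
  | nil => simp
  | cons b p ih => exact (dyCube_cons_subset b (p ++ l)).trans ih

/-- The `i`-th midface of the dyadic cube `s`. -/
noncomputable def dyFace (d : ℕ) (s : List (Fin d → Bool)) (i : Fin d) : Set (Fin d → ℝ) :=
  Set.univ.pi fun j => if j = i then {dyCorner d s j + ((2:ℝ) ^ (s.length + 1))⁻¹}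
    else Set.Icc (dyCorner d s j) (dyCorner d s j + ((2:ℝ) ^ s.length)⁻¹)

lemma mem_dyFace {d : ℕ} {s : List (Fin d → Bool)} {a b : Fin d → Bool} {i : Fin d}
    {x : Fin d → ℝ} (hab : a i ≠ b i)
    (ha : x ∈ dyCube d (a :: s)) (hb : x ∈ dyCube d (b :: s)) :
    x ∈ dyFace d s i := by
  intro j _
  simp only [dyFace]
  by_cases hj : j = i
  · subst hj
    simp only [if_pos rfl, Set.mem_singleton_iff]
    have h1 := ha j (Set.mem_univ j)
    have h2 := hb j (Set.mem_univ j)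
    simp only [dyCorner, List.length_cons, Set.mem_Icc] at h1 h2
    rcases Bool.eq_false_or_eq_true (a j) with h | h <;>
      rcases Bool.eq_false_or_eq_true (b j) with h' | h' <;>
        simp [h, h'] at hab h1 h2 ⊢ <;> linarith [h1.1, h1.2, h2.1, h2.2]
  · rw [if_neg hj]
    exact (dyCube_cons_subset a s ha) j (Set.mem_univ j)

lemma suffix_mem_tree {d : ℕ} {T : Finset (List (Fin d → Bool))}
    (hparent : ∀ (b : Fin d → Bool) (l : List (Fin d → Bool)), b :: l ∈ T → l ∈ T) :
    ∀ l ∈ T, ∀ s, s <:+ l → s ∈ T := by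
  intro l hl
  induction l with
  | nil => intro s hs; rwa [List.suffix_nil.mp hs]
  | cons b l ih =>
    intro s hs
    rcases hs with ⟨t, ht⟩
    cases t with
    | nil =>
      have hs : s = b :: l := by simpa using ht
      exact hs ▸ hl
    | cons c t =>
      have : s <:+ l := ⟨t, by simpa using congrArg List.tail ht⟩
      exact ih (hparent b l hl) s this

lemma cover_B {d : ℕ} {T : Finset (List (Fin d → Bool))}
    (hparent : ∀ (b : Fin d → Bool) (l : List (Fin d → Bool)), b :: l ∈ T → l ∈ T)
    {n m : List (Fin d → Bool)}
    (hn : n ∉ T ∧ ∃ b l, n = b :: l ∧ l ∈ T)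
    (hm : m ∉ T ∧ ∃ b l, m = b :: l ∧ l ∈ T)
    (hnm : n ≠ m) {x : Fin d → ℝ}
    (hxn : x ∈ dyCube d n) (hxm : x ∈ dyCube d m) :
    ∃ s ∈ T, ∃ i : Fin d, x ∈ dyFace d s i := by
  obtain ⟨hnT, b₀, l₀, rfl, hl₀⟩ := hn
  obtain ⟨hmT, c₀, k₀, rfl, hk₀⟩ := hm
  -- neither is a suffix of the other
  have hns : ¬ (b₀ :: l₀) <:+ (c₀ :: k₀) := by
    rintro ⟨t, ht⟩
    cases t with
    | nil => exact hnm (by simpa using ht)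
    | cons e t =>
      have : (b₀ :: l₀) <:+ k₀ := ⟨t, by simpa using congrArg List.tail ht⟩
      exact hnT (suffix_mem_tree hparent k₀ hk₀ _ this)
  have hms : ¬ (c₀ :: k₀) <:+ (b₀ :: l₀) := by
    rintro ⟨t, ht⟩
    cases t with
    | nil => exact hnm (by simpa using ht.symm)
    | cons e t =>
      have : (c₀ :: k₀) <:+ l₀ := ⟨t, by simpa using congrArg List.tail ht⟩
      exact hmT (suffix_mem_tree hparent l₀ hl₀ _ this)
  obtain ⟨s, a, b, p', q', hab, hp, hq⟩ := suffix_split _ _ hns hms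
  -- s ∈ T
  have hsT : s ∈ T := by
    have h1 : (a :: s) <:+ (b₀ :: l₀) := hp ▸ ⟨p', rfl⟩
    rcases h1 with ⟨t, ht⟩
    cases t with
    | nil =>
      have : s = l₀ := by simpa using (congrArg List.tail ht)
      exact this ▸ hl₀
    | cons e t =>
      have : (a :: s) <:+ l₀ := ⟨t, by simpa using congrArg List.tail ht⟩
      exact suffix_mem_tree hparent l₀ hl₀ s ((List.suffix_cons a s).trans this)
  obtain ⟨i, hi⟩ := Function.ne_iff.mp hab
  have hxa : x ∈ dyCube d (a :: s) := by
    have : dyCube d (b₀ :: l₀) ⊆ dyCube d (a :: s) := by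
      rw [hp]; exact dyCube_append_subset p' (a :: s)
    exact this hxn
  have hxb : x ∈ dyCube d (b :: s) := by
    have : dyCube d (c₀ :: k₀) ⊆ dyCube d (b :: s) := by
      rw [hq]; exact dyCube_append_subset q' (b :: s)
    exact this hxm
  exact ⟨s, hsT, i, mem_dyFace hi hxa hxb⟩


lemma insertNth_lipschitz {k : ℕ} (i : Fin (k+1)) (c : ℝ) :
    LipschitzWith 1 (fun y : Fin k → ℝ => Fin.insertNth (α := fun _ : Fin (k+1) => ℝ) i c y) := by
  apply LipschitzWith.of_dist_le_mul
  intro x y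
  rw [NNReal.coe_one, one_mul]
  rw [dist_pi_le_iff dist_nonneg]
  intro j
  rcases eq_or_ne j i with rfl | hj
  · simp [Fin.insertNth_apply_same, dist_nonneg]
  · obtain ⟨j', rfl⟩ := Fin.exists_succAbove_eq hj
    simp only [Fin.insertNth_apply_succAbove]
    exact dist_le_pi_dist x y j'

lemma dyFace_measure {k : ℕ} (s : List (Fin (k+1) → Bool)) (i : Fin (k+1)) :
    μH[(k : ℝ)] (dyFace (k+1) s i) ≤ ENNReal.ofReal (((2:ℝ) ^ s.length)⁻¹ ^ k) := by
  classical
  set c : ℝ := dyCorner (k+1) s i + ((2:ℝ) ^ (s.length + 1))⁻¹ with hc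
  set f : (Fin k → ℝ) → (Fin (k+1) → ℝ) := fun y => Fin.insertNth (α := fun _ => ℝ) i c y with hf
  set box : Set (Fin k → ℝ) := Set.univ.pi fun j =>
    Set.Icc (dyCorner (k+1) s (i.succAbove j))
      (dyCorner (k+1) s (i.succAbove j) + ((2:ℝ) ^ s.length)⁻¹) with hbox
  have hsub : dyFace (k+1) s i ⊆ f '' box := by
    intro y hy
    refine ⟨fun j => y (i.succAbove j), ?_, ?_⟩
    · intro j _
      have := hy (i.succAbove j) (Set.mem_univ _)
      simpa [dyFace, if_neg (Fin.succAbove_ne i j)] using this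
    · have hyi : y i = c := by
        have := hy i (Set.mem_univ i)
        simpa [dyFace] using this
      rw [hf]
      simp only
      rw [← hyi]
      exact Fin.insertNth_self_removeNth i y
  calc μH[(k : ℝ)] (dyFace (k+1) s i) ≤ μH[(k : ℝ)] (f '' box) := measure_mono hsub
    _ ≤ ((1 : NNReal) : ENNReal) ^ (k : ℝ) * μH[(k : ℝ)] box :=
        (insertNth_lipschitz i c).hausdorffMeasure_image_le (by positivity) box
    _ = μH[(k : ℝ)] box := by simp
    _ = volume box := by
        have : ((k : ℝ)) = ((Fintype.card (Fin k) : ℕ) : ℝ) := by simp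
        rw [this, hausdorffMeasure_pi_real]
    _ ≤ ENNReal.ofReal (((2:ℝ) ^ s.length)⁻¹ ^ k) := by
        rw [hbox, volume_pi_pi]
        simp only [Real.volume_Icc, add_sub_cancel_left]
        rw [Finset.prod_const, ← ENNReal.ofReal_pow (by positivity)]
        simp


lemma card_filter_length_le {d j : ℕ} (T : Finset (List (Fin d → Bool))) :
    (T.filter (fun s => s.length = j)).card ≤ 2 ^ (d * j) := by
  classical
  have : (T.filter (fun s => s.length = j)).card ≤
      (Finset.univ : Finset (Fin j → (Fin d → Bool))).card := by
    apply Finset.card_le_card_of_injOn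
      (fun s => fun t : Fin j => s.getD t (fun _ => false))
      (fun _ _ => Finset.mem_univ _)
    intro s1 h1 s2 h2 heq
    simp only [Finset.coe_filter, Set.mem_setOf_eq] at h1 h2
    apply List.ext_getElem (h1.2.trans h2.2.symm)
    intro idx hi1 hi2
    have := congrFun heq ⟨idx, h1.2 ▸ hi1⟩
    simpa [List.getD_eq_getElem, hi1, hi2] using this
  calc (T.filter (fun s => s.length = j)).card
      ≤ (Finset.univ : Finset (Fin j → (Fin d → Bool))).card := this
    _ = 2 ^ (d * j) := by
        rw [Finset.card_univ, Fintype.card_fun]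
        simp [Fintype.card_fun, pow_mul]

lemma sum_pow_length_le {d : ℕ} (hd : 1 ≤ d) (T : Finset (List (Fin d → Bool)))
    (hne : ([] : List (Fin d → Bool)) ∈ T) :
    ∑ s ∈ T, (((2:ℝ) ^ s.length)⁻¹) ^ (d - 1)
      ≤ 2 ^ (d + 1) * (T.card : ℝ) ^ (1 / (d : ℝ)) := by
  classical
  have hN1 : 1 ≤ T.card := Finset.card_pos.mpr ⟨[], hne⟩
  set N := T.card with hNdef
  set x := (N : ℝ) ^ (1 / (d : ℝ)) with hxdef
  have hd0 : (d : ℝ) ≠ 0 := by positivity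
  have hx1 : 1 ≤ x := Real.one_le_rpow (by exact_mod_cast hN1) (by positivity)
  have hx0 : 0 ≤ x := by linarith
  have hxd : x ^ d = (N : ℝ) := by
    rw [hxdef, ← Real.rpow_natCast ((N:ℝ) ^ (1 / (d:ℝ))) d, ← Real.rpow_mul (by positivity),
      one_div, inv_mul_cancel₀ hd0, Real.rpow_one]
  rcases eq_or_lt_of_le hd with hd1 | hd2
  · -- d = 1
    have : d = 1 := hd1.symm
    subst this
    simp only [Nat.sub_self, pow_zero, Finset.sum_const, nsmul_eq_mul, mul_one]
    have : x = (N : ℝ) := by rw [hxdef]; norm_num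
    rw [this] at *
    have hN0 : (0:ℝ) ≤ (N:ℝ) := Nat.cast_nonneg N
    rw [← hNdef]
    norm_num
    linarith
  · -- d ≥ 2
    set k := d - 1 with hkdef
    have hkd : k + 1 = d := Nat.succ_pred_eq_of_pos (lt_of_lt_of_le Nat.zero_lt_one hd)
    have hk1 : 1 ≤ k := by omega
    set r := (((2:ℝ) ^ k)⁻¹) with hrdef
    have hr0 : 0 ≤ r := by positivity
    have hr2 : r ≤ 1 / 2 := by
      rw [hrdef]
      rw [div_eq_inv_mul, mul_one]
      apply inv_anti₀ (by norm_num)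
      calc (2:ℝ) = 2 ^ 1 := (pow_one 2).symm
        _ ≤ 2 ^ k := by apply pow_le_pow_right₀ (by norm_num) hk1
    set J := Nat.clog (2 ^ d) N with hJdef
    have hb2 : 1 < 2 ^ d := Nat.one_lt_two_pow_iff.mpr (by omega)
    have hNle : (N : ℝ) ≤ 2 ^ (d * J) := by
      have := Nat.le_pow_clog hb2 N
      rw [← pow_mul] at this
      exact_mod_cast this
    -- (a) 2^J ≤ 2 x
    have ha : (2:ℝ) ^ J ≤ 2 * x := by
      rcases Nat.eq_zero_or_pos J with hJ0 | hJpos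
      · rw [hJ0, pow_zero]; linarith
      · have hN2 : 1 < N := by
          by_contra h
          have : N = 1 := by omega
          rw [this] at hJdef
          simp [Nat.clog_one_right] at hJdef
          omega
        have hlt : 2 ^ (d * (J - 1)) < N := by
          have := Nat.pow_pred_clog_lt_self hb2 hN2
          rw [← pow_mul] at this
          simpa [← hJdef, Nat.pred_eq_sub_one] using this
        have hltR : (2:ℝ) ^ (d * (J-1)) < (N:ℝ) := by exact_mod_cast hlt
        have hx_gt : (2:ℝ) ^ (J - 1) < x := by
          by_contra h
          push_neg at h
          have hh : x ^ d ≤ ((2:ℝ) ^ (J-1)) ^ d := pow_le_pow_left₀ hx0 h d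
          rw [← pow_mul, mul_comm (J-1) d, hxd] at hh
          linarith
        calc (2:ℝ) ^ J = 2 * 2 ^ (J - 1) := by
              rw [← pow_succ']
              congr 1
              omega
          _ ≤ 2 * x := by linarith
    -- (b) N * r^J ≤ x
    have hb' : (N : ℝ) * r ^ J ≤ x := by
      have hxle : x ≤ 2 ^ J := by
        apply le_of_pow_le_pow_left₀ (by omega : d ≠ 0) (by positivity)
        rw [hxd, ← pow_mul, mul_comm]
        exact hNle
      have hNx : (N : ℝ) ≤ x * 2 ^ (k * J) := by
        calc (N:ℝ) = x ^ d := hxd.symm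
          _ = x * x ^ k := by rw [← hkd, pow_succ']
          _ ≤ x * (2 ^ J) ^ k := by
              apply mul_le_mul_of_nonneg_left (pow_le_pow_left₀ hx0 hxle k) hx0
          _ = x * 2 ^ (k * J) := by rw [← pow_mul, mul_comm J k]
      have h2 : (0:ℝ) < 2 ^ (k * J) := by positivity
      rw [hrdef, inv_pow, ← pow_mul, ← div_eq_mul_inv, div_le_iff₀ h2]
      exact hNx
    -- rewrite terms
    have hterm : ∀ s : List (Fin d → Bool),
        (((2:ℝ) ^ s.length)⁻¹) ^ k = r ^ s.length := by
      intro s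
      rw [hrdef, ← inv_pow, ← inv_pow, ← pow_mul, ← pow_mul, mul_comm]
    have hkterm : ∀ s ∈ T, (((2:ℝ) ^ s.length)⁻¹) ^ (d - 1) = r ^ s.length :=
      fun s _ => hterm s
    rw [Finset.sum_congr rfl hkterm]
    set M' := max (T.sup List.length + 1) J with hM'
    have hJM : J ≤ M' := le_max_right _ _
    have hmap : ∀ s ∈ T, s.length ∈ Finset.range M' := fun s hs =>
      Finset.mem_range.mpr (lt_of_lt_of_le (Nat.lt_succ_of_le (Finset.le_sup hs))
        (le_max_left _ _))
    have hfiber : ∑ s ∈ T, r ^ s.length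
        = ∑ j ∈ Finset.range M',
            (((T.filter (fun s => s.length = j)).card : ℝ)) * r ^ j := by
      rw [← Finset.sum_fiberwise_of_maps_to hmap (fun s => r ^ s.length)]
      refine Finset.sum_congr rfl fun j _ => ?_
      rw [Finset.sum_congr rfl
        (fun s hs => by rw [(Finset.mem_filter.mp hs).2] :
          ∀ s ∈ T.filter (fun s => s.length = j), r ^ s.length = r ^ j)]
      rw [Finset.sum_const, nsmul_eq_mul]
    rw [hfiber, Finset.range_eq_Ico, ← Finset.sum_Ico_consecutive _ (Nat.zero_le J) hJM]
    have h1 : ∑ j ∈ Finset.Ico 0 J,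
        (((T.filter (fun s => s.length = j)).card : ℝ)) * r ^ j ≤ 2 ^ J := by
      rw [← Finset.range_eq_Ico]
      calc ∑ j ∈ Finset.range J, (((T.filter (fun s => s.length = j)).card : ℝ)) * r ^ j
          ≤ ∑ j ∈ Finset.range J, (2:ℝ) ^ j := by
            apply Finset.sum_le_sum
            intro j _
            have hcard : (((T.filter (fun s => s.length = j)).card : ℝ)) ≤ 2 ^ (d * j) := by
              exact_mod_cast card_filter_length_le T
            have hid : (2:ℝ) ^ (d * j) * r ^ j = 2 ^ j := by
              have hdj : d * j = j + k * j := by rw [← hkd]; ring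
              rw [hrdef, inv_pow, ← pow_mul, hdj, pow_add]
              field_simp
            calc (((T.filter (fun s => s.length = j)).card : ℝ)) * r ^ j
                ≤ (2:ℝ) ^ (d * j) * r ^ j :=
                  mul_le_mul_of_nonneg_right hcard (by positivity)
              _ = 2 ^ j := hid
        _ = ((2:ℝ) ^ J - 1) / (2 - 1) := geom_sum_eq (by norm_num) J
        _ ≤ 2 ^ J := by norm_num
    have h2 : ∑ j ∈ Finset.Ico J M',
        (((T.filter (fun s => s.length = j)).card : ℝ)) * r ^ j ≤ 2 * ((N:ℝ) * r ^ J) := by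
      calc ∑ j ∈ Finset.Ico J M', (((T.filter (fun s => s.length = j)).card : ℝ)) * r ^ j
          ≤ ∑ j ∈ Finset.Ico J M', (N:ℝ) * r ^ j := by
            apply Finset.sum_le_sum
            intro j _
            apply mul_le_mul_of_nonneg_right _ (by positivity)
            exact_mod_cast Finset.card_filter_le T _
        _ = (N:ℝ) * ∑ j ∈ Finset.Ico J M', r ^ j := by rw [Finset.mul_sum]
        _ ≤ (N:ℝ) * (r ^ J * 2) := by
            apply mul_le_mul_of_nonneg_left _ (Nat.cast_nonneg N)
            rw [Finset.sum_Ico_eq_sum_range]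
            have : ∀ t, r ^ (J + t) = r ^ J * r ^ t := fun t => pow_add r J t
            rw [Finset.sum_congr rfl (fun t _ => this t), ← Finset.mul_sum]
            apply mul_le_mul_of_nonneg_left _ (by positivity)
            calc ∑ t ∈ Finset.range (M' - J), r ^ t
                ≤ ∑ t ∈ Finset.range (M' - J), ((1:ℝ)/2) ^ t :=
                  Finset.sum_le_sum fun t _ => pow_le_pow_left₀ hr0 hr2 t
              _ ≤ 2 := sum_geometric_two_le _
        _ = 2 * ((N:ℝ) * r ^ J) := by ring
    have h4 : (4:ℝ) ≤ 2 ^ (d + 1) := by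
      calc (4:ℝ) = 2 ^ 2 := by norm_num
        _ ≤ 2 ^ (d + 1) := pow_le_pow_right₀ one_le_two (by omega)
    calc (∑ j ∈ Finset.Ico 0 J, (((T.filter (fun s => s.length = j)).card : ℝ)) * r ^ j)
          + ∑ j ∈ Finset.Ico J M', (((T.filter (fun s => s.length = j)).card : ℝ)) * r ^ j
        ≤ 2 ^ J + 2 * ((N:ℝ) * r ^ J) := add_le_add h1 h2
      _ ≤ 2 * x + 2 * x := by linarith [ha, hb']
      _ = 4 * x := by ring
      _ ≤ 2 ^ (d + 1) * x := mul_le_mul_of_nonneg_right h4 hx0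

/-- Common-boundary surface-area bound: for a truncated proper subtree `T` of the dyadic
tree of `[0,1]^d` with outer leaves `Λ`, the set `B` of points belonging to at least two
cubes of `Λ` has `(d-1)`-dimensional Hausdorff measure at most `2^{d+1} d (#T)^{1/d}`. -/
theorem stmt_9 (d : ℕ) (hd : 1 ≤ d)
    (T : Finset (List (Fin d → Bool)))
    (hroot : ([] : List (Fin d → Bool)) ∈ T)
    (hparent : ∀ (b : Fin d → Bool) (l : List (Fin d → Bool)), b :: l ∈ T → l ∈ T)
    (Λ : Set (List (Fin d → Bool)))
    (hΛ : Λ = {n | n ∉ T ∧ ∃ b l, n = b :: l ∧ l ∈ T})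
    (B : Set (Fin d → ℝ))
    (hB : B = {x | ∃ n ∈ Λ, ∃ m ∈ Λ, n ≠ m ∧ x ∈ dyCube d n ∧ x ∈ dyCube d m}) :
    μH[(d : ℝ) - 1] B ≤ ENNReal.ofReal (2 ^ (d + 1) * d * (T.card : ℝ) ^ (1 / (d : ℝ))) := by
  classical
  obtain ⟨k, rfl⟩ : ∃ k, d = k + 1 := ⟨d - 1, by omega⟩
  have hexp : (((k+1 : ℕ)) : ℝ) - 1 = (k : ℝ) := by push_cast; ring
  have hcover : B ⊆ ⋃ s ∈ T, ⋃ i : Fin (k+1), dyFace (k+1) s i := by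
    rw [hB]
    rintro x ⟨n, hn, m, hm, hnm, hxn, hxm⟩
    rw [hΛ] at hn hm
    obtain ⟨s, hsT, i, hface⟩ := cover_B hparent hn hm hnm hxn hxm
    exact Set.mem_biUnion hsT (Set.mem_iUnion.mpr ⟨i, hface⟩)
  calc μH[((k+1 : ℕ) : ℝ) - 1] B
      ≤ μH[((k+1 : ℕ) : ℝ) - 1] (⋃ s ∈ T, ⋃ i : Fin (k+1), dyFace (k+1) s i) :=
        measure_mono hcover
    _ ≤ ∑ s ∈ T, μH[((k+1 : ℕ) : ℝ) - 1] (⋃ i : Fin (k+1), dyFace (k+1) s i) :=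
        measure_biUnion_finset_le T _
    _ ≤ ∑ s ∈ T, ∑ i : Fin (k+1), μH[((k+1 : ℕ) : ℝ) - 1] (dyFace (k+1) s i) :=
        Finset.sum_le_sum fun s _ => measure_iUnion_fintype_le _ _
    _ ≤ ∑ s ∈ T, ∑ _i : Fin (k+1), ENNReal.ofReal ((((2:ℝ) ^ s.length)⁻¹) ^ k) := by
        apply Finset.sum_le_sum
        intro s _
        apply Finset.sum_le_sum
        intro i _
        rw [hexp]
        exact dyFace_measure s i
    _ = ∑ s ∈ T, ENNReal.ofReal (((k+1 : ℕ) : ℝ) * (((2:ℝ) ^ s.length)⁻¹) ^ k) := by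
        refine Finset.sum_congr rfl fun s _ => ?_
        rw [Finset.sum_const, Finset.card_univ, Fintype.card_fin, nsmul_eq_mul,
          ENNReal.ofReal_mul (by positivity), ENNReal.ofReal_natCast]
    _ = ENNReal.ofReal (∑ s ∈ T, ((k+1 : ℕ) : ℝ) * (((2:ℝ) ^ s.length)⁻¹) ^ k) :=
        (ENNReal.ofReal_sum_of_nonneg fun s _ => by positivity).symm
    _ ≤ ENNReal.ofReal (2 ^ ((k+1) + 1) * ((k+1 : ℕ) : ℝ) * (T.card : ℝ) ^ (1 / ((k+1 : ℕ) : ℝ))) := by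
        apply ENNReal.ofReal_le_ofReal
        rw [← Finset.mul_sum]
        have hsum := sum_pow_length_le (by omega : 1 ≤ k + 1) T hroot
        have hk : k + 1 - 1 = k := by omega
        rw [hk] at hsum
        calc ((k+1 : ℕ) : ℝ) * ∑ s ∈ T, (((2:ℝ) ^ s.length)⁻¹) ^ k
            ≤ ((k+1 : ℕ) : ℝ) * (2 ^ ((k+1) + 1) * (T.card : ℝ) ^ (1 / ((k+1 : ℕ) : ℝ))) :=
              mul_le_mul_of_nonneg_left hsum (Nat.cast_nonneg _)
          _ = 2 ^ ((k+1) + 1) * ((k+1 : ℕ) : ℝ) * (T.card : ℝ) ^ (1 / ((k+1 : ℕ) : ℝ)) := by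
              ring
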